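/- Suppose the average log-likelihood ratio statistics satisfy: under P0, Λ_n/n → −I0 a.s.; and the fixed-sample-size test uses threshold c*(α,β) and sample size n*(α,β) with P0(T_{n*} > c*) ≤ α where T_n = Λ_n/n. If n*(α,β) → ∞ as α∧β → 0, then liminf c*(α,β) ≥ −I0 as α∧β → 0 (with α bounded away from 1). Symmetrically, if under P1, Λ_n/n → I1 a.s., then limsup c*(α,β) ≤ I1. -/

import Mathlib

open MeasureTheory Filter Set

lemma aux_le {Ω : Type*} [MeasurableSpace Ω] (P : Measure Ω) [IsProbabilityMeasure P]
    (T : ℕ → Ω → ℝ) (hT : ∀ n, Measurable (T n)) {L c : ℝ} (hc : c < L)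
    (has : ∀ᵐ ω ∂P, Tendsto (fun n => T n ω) atTop (nhds L)) :
    Tendsto (fun n => (P {ω | T n ω ≤ c}).toReal) atTop (nhds 0) := by
  have h : Tendsto (fun n => P {ω | T n ω ≤ c}) atTop (nhds (P (∅ : Set Ω))) := by
    apply tendsto_measure_of_ae_tendsto_indicator_of_isFiniteMeasure atTop MeasurableSet.empty
      (fun n => measurableSet_le (hT n) measurable_const)
    filter_upwards [has] with ω hω
    filter_upwards [hω.eventually (eventually_gt_nhds hc)] with n hn
    simp [not_le.mpr hn]
  simp only [measure_empty] at h
  simpa [Function.comp_def] using (ENNReal.tendsto_toReal (by simp)).comp h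

lemma aux_ge {Ω : Type*} [MeasurableSpace Ω] (P : Measure Ω) [IsProbabilityMeasure P]
    (T : ℕ → Ω → ℝ) (hT : ∀ n, Measurable (T n)) {L c : ℝ} (hc : L < c)
    (has : ∀ᵐ ω ∂P, Tendsto (fun n => T n ω) atTop (nhds L)) :
    Tendsto (fun n => (P {ω | c ≤ T n ω}).toReal) atTop (nhds 0) := by
  have h : Tendsto (fun n => P {ω | c ≤ T n ω}) atTop (nhds (P (∅ : Set Ω))) := by
    apply tendsto_measure_of_ae_tendsto_indicator_of_isFiniteMeasure atTop MeasurableSet.empty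
      (fun n => measurableSet_le measurable_const (hT n))
    filter_upwards [has] with ω hω
    filter_upwards [hω.eventually (eventually_lt_nhds hc)] with n hn
    simp [not_le.mpr hn]
  simp only [measure_empty] at h
  simpa [Function.comp_def] using (ENNReal.tendsto_toReal (by simp)).comp h

lemma compl_toReal {Ω : Type*} [MeasurableSpace Ω] (P : Measure Ω) [IsProbabilityMeasure P]
    {A : Set Ω} (hA : MeasurableSet A) :
    (P Aᶜ).toReal = 1 - (P A).toReal := by
  rw [measure_compl hA (measure_ne_top _ _), measure_univ,
    ENNReal.toReal_sub_of_le prob_le_one (by simp), ENNReal.toReal_one]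

/-- Suppose `T n = Λ_n/n → -I0` a.s. under `P0` and `T n → I1` a.s. under `P1`,
and the fixed-sample-size test with sample size `n*(α,β)` and threshold `c*(α,β)` satisfies
`P0 (T_{n*} > c*) ≤ α` and `P1 (T_{n*} ≤ c*) ≤ β`. Then along any sequence `(α k, β k)` in
`(0,1)²` with `α k ∧ β k → 0`, `α` and `β` bounded away from `1`, and `n*(α k, β k) → ∞`, one has
`liminf c*(α k, β k) ≥ -I0` and `limsup c*(α k, β k) ≤ I1` (in ε-form). -/
theorem stmt15 {Ω : Type*} [MeasurableSpace Ω] (P0 P1 : Measure Ω)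
    [IsProbabilityMeasure P0] [IsProbabilityMeasure P1]
    (T : ℕ → Ω → ℝ) (hTmeas : ∀ n, Measurable (T n))
    (I0 I1 : ℝ) (hI0 : 0 < I0) (hI1 : 0 < I1)
    (nstar : ℝ → ℝ → ℕ) (cstar : ℝ → ℝ → ℝ)
    (has0 : ∀ᵐ ω ∂P0, Tendsto (fun n => T n ω) atTop (nhds (-I0)))
    (has1 : ∀ᵐ ω ∂P1, Tendsto (fun n => T n ω) atTop (nhds I1))
    (herr0 : ∀ a b : ℝ, a ∈ Ioo (0 : ℝ) 1 → b ∈ Ioo (0 : ℝ) 1 →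
      (P0 {ω | cstar a b < T (nstar a b) ω}).toReal ≤ a)
    (herr1 : ∀ a b : ℝ, a ∈ Ioo (0 : ℝ) 1 → b ∈ Ioo (0 : ℝ) 1 →
      (P1 {ω | T (nstar a b) ω ≤ cstar a b}).toReal ≤ b)
    (α β : ℕ → ℝ) (hαm : ∀ k, α k ∈ Ioo (0 : ℝ) 1) (hβm : ∀ k, β k ∈ Ioo (0 : ℝ) 1)
    (hmin : Tendsto (fun k => min (α k) (β k)) atTop (nhds 0))
    (ha : ∃ a < (1 : ℝ), ∀ k, α k ≤ a) (hb : ∃ b < (1 : ℝ), ∀ k, β k ≤ b)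
    (hn : Tendsto (fun k => nstar (α k) (β k)) atTop atTop) :
    ∀ ε > (0 : ℝ),
      (∀ᶠ k in atTop, -I0 - ε < cstar (α k) (β k)) ∧
      (∀ᶠ k in atTop, cstar (α k) (β k) < I1 + ε) := by
  intro ε hε
  obtain ⟨a, ha1, haa⟩ := ha
  obtain ⟨b, hb1, hbb⟩ := hb
  have h0 := aux_le P0 T hTmeas (c := -I0 - ε) (by linarith) has0
  have h1 := aux_ge P1 T hTmeas (c := I1 + ε) (by linarith) has1
  have h0' : ∀ᶠ n in atTop, (P0 {ω | T n ω ≤ -I0 - ε}).toReal < 1 - a :=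
    h0.eventually (eventually_lt_nhds (by linarith))
  have h1' : ∀ᶠ n in atTop, (P1 {ω | I1 + ε ≤ T n ω}).toReal < 1 - b :=
    h1.eventually (eventually_lt_nhds (by linarith))
  obtain ⟨N0, hN0⟩ := h0'.exists_forall_of_atTop
  obtain ⟨N1, hN1⟩ := h1'.exists_forall_of_atTop
  constructor
  · filter_upwards [hn.eventually (eventually_ge_atTop N0)] with k hk
    by_contra h
    push_neg at h
    set n := nstar (α k) (β k) with hn_def
    have key := herr0 (α k) (β k) (hαm k) (hβm k)
    have hsub : {ω | -I0 - ε < T n ω} ⊆ {ω | cstar (α k) (β k) < T n ω} :=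
      fun ω hω => lt_of_le_of_lt h hω
    have hmono : (P0 {ω | -I0 - ε < T n ω}).toReal ≤
        (P0 {ω | cstar (α k) (β k) < T n ω}).toReal :=
      ENNReal.toReal_mono (measure_ne_top _ _) (measure_mono hsub)
    have hceq : {ω | -I0 - ε < T n ω} = {ω | T n ω ≤ -I0 - ε}ᶜ := by
      ext ω; simp [not_le]
    have hcompl : (P0 {ω | -I0 - ε < T n ω}).toReal
        = 1 - (P0 {ω | T n ω ≤ -I0 - ε}).toReal := by
      rw [hceq, compl_toReal P0 (measurableSet_le (hTmeas n) measurable_const)]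
    have hsmall := hN0 n hk
    have := haa k
    linarith
  · filter_upwards [hn.eventually (eventually_ge_atTop N1)] with k hk
    by_contra h
    push_neg at h
    set n := nstar (α k) (β k) with hn_def
    have key := herr1 (α k) (β k) (hαm k) (hβm k)
    have hsub : {ω | T n ω < I1 + ε} ⊆ {ω | T n ω ≤ cstar (α k) (β k)} :=
      fun ω hω => le_trans (le_of_lt hω) h
    have hmono : (P1 {ω | T n ω < I1 + ε}).toReal ≤
        (P1 {ω | T n ω ≤ cstar (α k) (β k)}).toReal :=
      ENNReal.toReal_mono (measure_ne_top _ _) (measure_mono hsub)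
    have hceq : {ω | T n ω < I1 + ε} = {ω | I1 + ε ≤ T n ω}ᶜ := by
      ext ω; simp [not_le]
    have hcompl : (P1 {ω | T n ω < I1 + ε}).toReal
        = 1 - (P1 {ω | I1 + ε ≤ T n ω}).toReal := by
      rw [hceq, compl_toReal P1 (measurableSet_le measurable_const (hTmeas n))]
    have hsmall := hN1 n hk
    have := hbb k
    linarith
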